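/- Let (γ_k)_{k≥1} be a sequence of positive reals with Γ_n := ∑_{k=1}^n γ_k. Then for every n, ∑_{k=1}^n γ_k³ Γ_k ≤ (∑_{k=1}^n γ_k²)². -/

import Mathlib

open Finset

theorem sum_cube_mul_partial_le_sq_sum_sq
    (γ : ℕ → ℝ) (hpos : ∀ k, 0 < γ k)
    (hmono : ∀ j k, 1 ≤ j → j ≤ k → γ k ≤ γ j)
    (Γ : ℕ → ℝ) (hΓ : ∀ n, Γ n = ∑ k ∈ Finset.Icc 1 n, γ k) :
    ∀ n, ∑ k ∈ Finset.Icc 1 n, (γ k) ^ 3 * Γ k ≤ (∑ k ∈ Finset.Icc 1 n, (γ k) ^ 2) ^ 2 := by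
  intro n
  set S : ℕ → ℝ := fun m => ∑ k ∈ Finset.Icc 1 m, (γ k) ^ 2 with hS
  have key : ∀ k ∈ Finset.Icc 1 n, (γ k) ^ 3 * Γ k ≤ (γ k) ^ 2 * S n := by
    intro k hk
    rw [Finset.mem_Icc] at hk
    have h1 : γ k * Γ k ≤ S k := by
      rw [hΓ, Finset.mul_sum]
      apply Finset.sum_le_sum
      intro j hj
      rw [Finset.mem_Icc] at hj
      have := hmono j k hj.1 hj.2
      nlinarith [hpos j, hpos k]
    have h2 : S k ≤ S n := by
      apply Finset.sum_le_sum_of_subset_of_nonneg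
      · exact Finset.Icc_subset_Icc_right hk.2
      · intro i _ _; positivity
    have h3 : (0:ℝ) ≤ (γ k) ^ 2 := by positivity
    calc (γ k) ^ 3 * Γ k = (γ k) ^ 2 * (γ k * Γ k) := by ring
      _ ≤ (γ k) ^ 2 * S k := by nlinarith
      _ ≤ (γ k) ^ 2 * S n := by nlinarith
  calc ∑ k ∈ Finset.Icc 1 n, (γ k) ^ 3 * Γ k
      ≤ ∑ k ∈ Finset.Icc 1 n, (γ k) ^ 2 * S n := Finset.sum_le_sum key
    _ = S n * S n := by rw [← Finset.sum_mul]
    _ = (∑ k ∈ Finset.Icc 1 n, (γ k) ^ 2) ^ 2 := by rw [sq]
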